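/- Let K be a field of characteristic 0, let R := {(f,g) ∈ K[[x]] × K[[y]] : f(0) = g(0)}, and let D : R → R be the derivation D(f,g) = (x·f′, −y·g′). Let H₀ be a nilpotent n×n matrix over K, regarded as a matrix over R via the constants. Define ∇ : Rⁿ → Rⁿ by ∇(v) = D(v) + H₀·v. Then {v ∈ Rⁿ : ∇^N(v) = 0 for some N ∈ ℕ} = Kⁿ, the set of vectors with constant entries. -/

import Mathlib

/-- The ring `R = {(f,g) ∈ K⟦x⟧ × K⟦y⟧ : f(0) = g(0)}` (isomorphic to `K⟦x,y⟧/(xy)`),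
as a subalgebra of the product of two power series rings. -/
def nodeRing (K : Type*) [CommRing K] : Subalgebra K (PowerSeries K × PowerSeries K) where
  carrier := {p | PowerSeries.constantCoeff (R := K) p.1 = PowerSeries.constantCoeff (R := K) p.2}
  mul_mem' := by
    intro a b ha hb
    simp only [Set.mem_setOf_eq, Prod.fst_mul, Prod.snd_mul, map_mul] at *
    rw [ha, hb]
  add_mem' := by
    intro a b ha hb
    simp only [Set.mem_setOf_eq, Prod.fst_add, Prod.snd_add, map_add] at *
    rw [ha, hb]
  algebraMap_mem' := by
    intro r
    simp [Algebra.algebraMap_eq_smul_one, Prod.smul_fst, Prod.smul_snd]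

/-- The derivation `D(f,g) = (x·f′, −y·g′)` on the ring `nodeRing K`. -/
noncomputable def nodeD {K : Type*} [CommRing K] (p : nodeRing K) : nodeRing K :=
  ⟨(PowerSeries.X * PowerSeries.derivative K (p : PowerSeries K × PowerSeries K).1,
    -(PowerSeries.X * PowerSeries.derivative K (p : PowerSeries K × PowerSeries K).2)), by
    show PowerSeries.constantCoeff (R := K) _ = PowerSeries.constantCoeff (R := K) _
    simp⟩

set_option synthInstance.maxHeartbeats 1000000
set_option maxHeartbeats 1000000

open PowerSeries Matrix

lemma coeff_X_mul_deriv {K : Type*} [CommRing K] (k : ℕ) (f : PowerSeries K) :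
    PowerSeries.coeff (R := K) k (PowerSeries.X * PowerSeries.derivative K f)
      = (k : K) * PowerSeries.coeff (R := K) k f := by
  cases k with
  | zero => simp
  | succ m =>
      rw [PowerSeries.coeff_succ_X_mul, PowerSeries.coeff_derivative]
      push_cast; ring

noncomputable def fc (K : Type*) [CommRing K] (k : ℕ) : nodeRing K →ₗ[K] K :=
  (PowerSeries.coeff (R := K) k).comp ((LinearMap.fst K _ _).comp (Subalgebra.val (nodeRing K)).toLinearMap)

noncomputable def sc (K : Type*) [CommRing K] (k : ℕ) : nodeRing K →ₗ[K] K :=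
  (PowerSeries.coeff (R := K) k).comp ((LinearMap.snd K _ _).comp (Subalgebra.val (nodeRing K)).toLinearMap)

lemma fc_apply {K : Type*} [CommRing K] (k : ℕ) (p : nodeRing K) :
    fc K k p = PowerSeries.coeff (R := K) k (p : PowerSeries K × PowerSeries K).1 := rfl

lemma sc_apply {K : Type*} [CommRing K] (k : ℕ) (p : nodeRing K) :
    sc K k p = PowerSeries.coeff (R := K) k (p : PowerSeries K × PowerSeries K).2 := rfl

lemma fc_nodeD {K : Type*} [CommRing K] (k : ℕ) (p : nodeRing K) :
    fc K k (nodeD p) = (k : K) * fc K k p := by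
  simp [fc_apply, nodeD, coeff_X_mul_deriv]

lemma sc_nodeD {K : Type*} [CommRing K] (k : ℕ) (p : nodeRing K) :
    sc K k (nodeD p) = (-(k : K)) * sc K k p := by
  simp [sc_apply, nodeD, coeff_X_mul_deriv]

lemma fc_mulVec {K : Type*} [CommRing K] {n : ℕ} (k : ℕ)
    (H₀ : Matrix (Fin n) (Fin n) K) (v : Fin n → nodeRing K) (i : Fin n) :
    fc K k ((H₀.map (algebraMap K (nodeRing K))).mulVec v i)
      = H₀.mulVec (fun j => fc K k (v j)) i := by
  simp only [Matrix.mulVec, dotProduct, Matrix.map_apply]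
  rw [map_sum]
  congr 1; funext j
  rw [← Algebra.smul_def, _root_.map_smul, smul_eq_mul]

section
variable {K : Type*} [Field K] [CharZero K] {n : ℕ}

lemma fc_step (H₀ : Matrix (Fin n) (Fin n) K)
    (D : (Fin n → nodeRing K) → (Fin n → nodeRing K))
    (hD : ∀ (v : Fin n → nodeRing K) (i : Fin n),
      D v i = nodeD (v i) + (H₀.map (algebraMap K (nodeRing K))).mulVec v i)
    (k : ℕ) (v : Fin n → nodeRing K) (i : Fin n) :
    fc K k (D v i) = ((k : K) • (1 : Matrix (Fin n) (Fin n) K) + H₀).mulVec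
      (fun j => fc K k (v j)) i := by
  rw [hD, map_add, fc_nodeD, fc_mulVec, Matrix.add_mulVec, Matrix.smul_mulVec,
    Matrix.one_mulVec]
  simp [smul_eq_mul]

lemma sc_step (H₀ : Matrix (Fin n) (Fin n) K)
    (D : (Fin n → nodeRing K) → (Fin n → nodeRing K))
    (hD : ∀ (v : Fin n → nodeRing K) (i : Fin n),
      D v i = nodeD (v i) + (H₀.map (algebraMap K (nodeRing K))).mulVec v i)
    (k : ℕ) (v : Fin n → nodeRing K) (i : Fin n) :
    sc K k (D v i) = ((-(k : K)) • (1 : Matrix (Fin n) (Fin n) K) + H₀).mulVec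
      (fun j => sc K k (v j)) i := by
  have : sc K k ((H₀.map (algebraMap K (nodeRing K))).mulVec v i)
      = H₀.mulVec (fun j => sc K k (v j)) i := by
    simp only [Matrix.mulVec, dotProduct, Matrix.map_apply]
    rw [map_sum]
    congr 1; funext j
    rw [← Algebra.smul_def, _root_.map_smul, smul_eq_mul]
  rw [hD, map_add, sc_nodeD, this, Matrix.add_mulVec, Matrix.smul_mulVec,
    Matrix.one_mulVec]
  simp [smul_eq_mul]

lemma fc_iter (H₀ : Matrix (Fin n) (Fin n) K)
    (D : (Fin n → nodeRing K) → (Fin n → nodeRing K))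
    (hD : ∀ (v : Fin n → nodeRing K) (i : Fin n),
      D v i = nodeD (v i) + (H₀.map (algebraMap K (nodeRing K))).mulVec v i)
    (k : ℕ) (N : ℕ) (v : Fin n → nodeRing K) :
    (fun i => fc K k (D^[N] v i)) = (((k : K) • (1 : Matrix (Fin n) (Fin n) K) + H₀) ^ N).mulVec
      (fun j => fc K k (v j)) := by
  induction N generalizing v with
  | zero => simp [Matrix.one_mulVec]
  | succ m ih =>
      funext i
      rw [Function.iterate_succ_apply, congrFun (ih (D v)) i]
      have : (fun j => fc K k (D v j)) = (((k : K) • (1 : Matrix (Fin n) (Fin n) K) + H₀)).mulVec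
          (fun j => fc K k (v j)) := funext fun j => fc_step H₀ D hD k v j
      rw [this, Matrix.mulVec_mulVec, ← pow_succ]

lemma sc_iter (H₀ : Matrix (Fin n) (Fin n) K)
    (D : (Fin n → nodeRing K) → (Fin n → nodeRing K))
    (hD : ∀ (v : Fin n → nodeRing K) (i : Fin n),
      D v i = nodeD (v i) + (H₀.map (algebraMap K (nodeRing K))).mulVec v i)
    (k : ℕ) (N : ℕ) (v : Fin n → nodeRing K) :
    (fun i => sc K k (D^[N] v i)) = (((-(k : K)) • (1 : Matrix (Fin n) (Fin n) K) + H₀) ^ N).mulVec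
      (fun j => sc K k (v j)) := by
  induction N generalizing v with
  | zero => simp [Matrix.one_mulVec]
  | succ m ih =>
      funext i
      rw [Function.iterate_succ_apply, congrFun (ih (D v)) i]
      have : (fun j => sc K k (D v j)) = (((-(k : K)) • (1 : Matrix (Fin n) (Fin n) K) + H₀)).mulVec
          (fun j => sc K k (v j)) := funext fun j => sc_step H₀ D hD k v j
      rw [this, Matrix.mulVec_mulVec, ← pow_succ]

lemma isUnit_smul_one_add (c : K) (hc : c ≠ 0) (H₀ : Matrix (Fin n) (Fin n) K)
    (hH₀ : IsNilpotent H₀) : IsUnit (c • (1 : Matrix (Fin n) (Fin n) K) + H₀) := by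
  refine IsNilpotent.isUnit_add_left_of_commute hH₀ ?_ ((Commute.one_right H₀).smul_right c)
  rw [Matrix.isUnit_iff_isUnit_det, Matrix.det_smul, Matrix.det_one, mul_one]
  exact (isUnit_iff_ne_zero.mpr hc).pow _

end

lemma coe_algebraMap_nodeRing {K : Type*} [CommRing K] (c : K) :
    ((algebraMap K (nodeRing K) c : nodeRing K) : PowerSeries K × PowerSeries K)
      = (PowerSeries.C (R := K) c, PowerSeries.C (R := K) c) := rfl

lemma nodeD_algebraMap {K : Type*} [CommRing K] (c : K) :
    nodeD (algebraMap K (nodeRing K) c) = 0 := by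
  apply Subtype.ext
  show ((PowerSeries.X * PowerSeries.derivative K (PowerSeries.C (R := K) c), _) :
    PowerSeries K × PowerSeries K) = 0
  simp

lemma mulVec_map_alg {K : Type*} [CommRing K] {n : ℕ} (H : Matrix (Fin n) (Fin n) K)
    (u : Fin n → K) (i : Fin n) :
    (H.map (algebraMap K (nodeRing K))).mulVec (fun j => algebraMap K (nodeRing K) (u j)) i
      = algebraMap K (nodeRing K) (H.mulVec u i) := by
  simp [Matrix.mulVec, dotProduct, map_sum, _root_.map_mul, Matrix.map_apply]

set_option synthInstance.maxHeartbeats 1000000 in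
set_option maxHeartbeats 1000000 in
/-- Let `K` be a field of characteristic `0`, `R = nodeRing K`, and `H₀` a
nilpotent `n × n` matrix over `K`, regarded over `R` via the constants. Define
`D v = nodeD v + H₀ ⬝ v` on `Rⁿ`. Then the set of vectors killed by some iterate of `D` is
exactly `Kⁿ`, the set of vectors with constant entries. -/
theorem stmt5 (K : Type*) [Field K] [CharZero K] (n : ℕ)
    (H₀ : Matrix (Fin n) (Fin n) K) (hH₀ : IsNilpotent H₀)
    (D : (Fin n → nodeRing K) → (Fin n → nodeRing K))
    (hD : ∀ (v : Fin n → nodeRing K) (i : Fin n),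
      D v i = nodeD (v i) + (H₀.map (algebraMap K (nodeRing K))).mulVec v i) :
    {v : Fin n → nodeRing K | ∃ N : ℕ, D^[N] v = 0}
      = {v : Fin n → nodeRing K | ∀ i, v i ∈ Set.range (algebraMap K (nodeRing K))} := by
  ext v
  simp only [Set.mem_setOf_eq]
  constructor
  · rintro ⟨N, hN⟩ i
    -- all positive coefficients vanish
    have hfc : ∀ k : ℕ, 1 ≤ k → ∀ j, fc K k (v j) = 0 := by
      intro k hk j
      have hM : IsUnit ((((k : K) • (1 : Matrix (Fin n) (Fin n) K) + H₀)) ^ N) :=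
        (isUnit_smul_one_add (k : K) (Nat.cast_ne_zero.mpr (by omega)) H₀ hH₀).pow N
      have hinj := Matrix.mulVec_injective_iff_isUnit.mpr hM
      have h0 : (((k : K) • (1 : Matrix (Fin n) (Fin n) K) + H₀) ^ N).mulVec
          (fun j => fc K k (v j)) = (((k : K) • (1 : Matrix (Fin n) (Fin n) K) + H₀) ^ N).mulVec 0 := by
        rw [← fc_iter H₀ D hD k N v, hN, Matrix.mulVec_zero]
        funext i'; simp
      have := hinj h0
      exact congrFun this j
    have hsc : ∀ k : ℕ, 1 ≤ k → ∀ j, sc K k (v j) = 0 := by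
      intro k hk j
      have hM : IsUnit ((((-(k : K)) • (1 : Matrix (Fin n) (Fin n) K) + H₀)) ^ N) :=
        (isUnit_smul_one_add (-(k : K)) (neg_ne_zero.mpr (Nat.cast_ne_zero.mpr (by omega))) H₀ hH₀).pow N
      have hinj := Matrix.mulVec_injective_iff_isUnit.mpr hM
      have h0 : (((-(k : K)) • (1 : Matrix (Fin n) (Fin n) K) + H₀) ^ N).mulVec
          (fun j => sc K k (v j)) = (((-(k : K)) • (1 : Matrix (Fin n) (Fin n) K) + H₀) ^ N).mulVec 0 := by
        rw [← sc_iter H₀ D hD k N v, hN, Matrix.mulVec_zero]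
        funext i'; simp
      exact congrFun (hinj h0) j
    refine ⟨PowerSeries.constantCoeff (R := K) ((v i : PowerSeries K × PowerSeries K)).1, ?_⟩
    apply Subtype.ext
    rw [coe_algebraMap_nodeRing]
    have hmem : PowerSeries.constantCoeff (R := K) ((v i : PowerSeries K × PowerSeries K)).1
        = PowerSeries.constantCoeff (R := K) ((v i : PowerSeries K × PowerSeries K)).2 := (v i).2
    refine Prod.ext ?_ ?_
    · apply PowerSeries.ext; intro k
      cases k with
      | zero => simp [PowerSeries.coeff_zero_eq_constantCoeff]
      | succ m =>
          rw [PowerSeries.coeff_C]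
          simp only [Nat.succ_ne_zero, if_false]
          exact (hfc (m+1) (by omega) i).symm
    · apply PowerSeries.ext; intro k
      cases k with
      | zero => simp [PowerSeries.coeff_zero_eq_constantCoeff, hmem]
      | succ m =>
          rw [PowerSeries.coeff_C]
          simp only [Nat.succ_ne_zero, if_false]
          exact (hsc (m+1) (by omega) i).symm
  · intro hv
    choose c hc using hv
    obtain ⟨m, hm⟩ := hH₀
    refine ⟨m, ?_⟩
    have key : ∀ N : ℕ, D^[N] v = fun i => algebraMap K (nodeRing K) ((H₀ ^ N).mulVec c i) := by
      intro N
      induction N with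
      | zero =>
          funext i
          simp only [Function.iterate_zero, id_eq, pow_zero, Matrix.one_mulVec]
          exact (hc i).symm
      | succ N ih =>
          rw [Function.iterate_succ_apply', ih]
          funext i
          rw [hD, nodeD_algebraMap, zero_add,
            mulVec_map_alg H₀ (fun j => (H₀ ^ N).mulVec c j) i]
          rw [show H₀.mulVec (fun j => (H₀ ^ N).mulVec c j) i
              = (H₀ * H₀ ^ N).mulVec c i from by rw [← Matrix.mulVec_mulVec], ← pow_succ']
    rw [key m, hm]
    funext i
    simp [Matrix.zero_mulVec]
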